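/- Fix n ≥ 1, x ∈ ℝ, r > 0 and points y_1,…,y_n ∈ ℝ. Let P : ℝ×ℝ → ℝ, let F : ℝ → ℝ be continuous at x, and let φ_i : ℝ → ℝ for i ≥ 0 satisfy: P(x,y_j) ≠ 0 and F(x)·φ_0(y_j) = 1 for all j; Σ_{i≥0} r^i |φ_i(y_j)| < ∞ for all j; and P(x',y_j) = P(x,y_j) · F(x') · Σ_{i≥0} (x'-x)^i φ_i(y_j) for all x' with |x'-x| < r and all j. Then, as (x_1,…,x_n) tends to (x,…,x) through n-tuples of pairwise distinct points in (x-r, x+r), the ratio det( P(x_i,y_j) )_{i,j=1}^n / det( (x_j-x)^{i-1} )_{i,j=1}^n converges to F(x)^n · ∏_{j=1}^n P(x,y_j) · det( φ_{i-1}(y_j) )_{i,j=1}^n. -/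

import Mathlib

set_option maxHeartbeats 1000000

open Finset Polynomial

variable {n : ℕ}

/-- Divided-difference style weighted sum: `∑ m ∈ s, f m / ∏_{l ∈ s, l ≠ m} (v m - v l)`. -/
noncomputable def ddsum (v : Fin n → ℝ) (s : Finset (Fin n)) (f : Fin n → ℝ) : ℝ :=
  ∑ m ∈ s, (∏ l ∈ s.erase m, (v m - v l))⁻¹ * f m

lemma coeff_lagrange_basis (v : Fin n → ℝ) (s : Finset (Fin n)) (i : Fin n) (hi : i ∈ s) :
    (Lagrange.basis s v i).coeff (s.card - 1) = (∏ l ∈ s.erase i, (v i - v l))⁻¹ := by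
  have h1 : Lagrange.basis s v i
      = C (∏ l ∈ s.erase i, (v i - v l)⁻¹) * ∏ l ∈ s.erase i, (X - C (v l)) := by
    rw [Lagrange.basis]
    simp_rw [Lagrange.basisDivisor]
    rw [Finset.prod_mul_distrib, map_prod]
  have hmono : (∏ l ∈ s.erase i, (X - C (v l)) : ℝ[X]).Monic :=
    monic_prod_of_monic _ _ fun l _ => monic_X_sub_C (v l)
  have hdeg : (∏ l ∈ s.erase i, (X - C (v l)) : ℝ[X]).natDegree = s.card - 1 := by
    rw [natDegree_prod_of_monic _ _ fun l _ => monic_X_sub_C (v l)]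
    simp [Finset.card_erase_of_mem hi]
  rw [h1, coeff_C_mul, ← hdeg, hmono.coeff_natDegree, mul_one, ← Finset.prod_inv_distrib]

lemma coeff_interpolate (v : Fin n → ℝ) (s : Finset (Fin n)) (f : Fin n → ℝ) :
    (Lagrange.interpolate s v f).coeff (s.card - 1) = ddsum v s f := by
  rw [Lagrange.interpolate_apply, finset_sum_coeff, ddsum]
  refine Finset.sum_congr rfl fun i hi => ?_
  rw [coeff_C_mul, coeff_lagrange_basis v s i hi, mul_comm]

/-- B1: divided differences of low powers. -/
lemma ddsum_pow (v : Fin n → ℝ) (s : Finset (Fin n)) (hv : Set.InjOn v s) (k : ℕ)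
    (hk : k < s.card) :
    ddsum v s (fun m => v m ^ k) = if k = s.card - 1 then 1 else 0 := by
  have h := Lagrange.eq_interpolate (f := (X : ℝ[X]) ^ k) hv
    (by rw [degree_X_pow]; exact_mod_cast hk)
  have h2 := congrArg (fun p : ℝ[X] => p.coeff (s.card - 1)) h
  simp only [coeff_X_pow, eval_pow, eval_X] at h2
  rw [coeff_interpolate] at h2
  rw [← h2]
  congr 1
  exact eq_iff_iff.2 eq_comm

/-- Recurrence for divided differences of powers. -/
lemma ddsum_pow_succ (v : Fin n → ℝ) (a : Fin n) (s : Finset (Fin n)) (ha : a ∉ s)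
    (hv : Set.InjOn v ↑(insert a s)) (k : ℕ) :
    ddsum v (insert a s) (fun m => v m ^ (k + 1))
      = v a * ddsum v (insert a s) (fun m => v m ^ k) + ddsum v s (fun m => v m ^ k) := by
  unfold ddsum
  rw [Finset.sum_insert ha, Finset.sum_insert ha, Finset.erase_insert ha]
  have key : ∀ m ∈ s,
      (∏ l ∈ (insert a s).erase m, (v m - v l))⁻¹ * v m ^ (k + 1)
        = v a * ((∏ l ∈ (insert a s).erase m, (v m - v l))⁻¹ * v m ^ k)
          + (∏ l ∈ s.erase m, (v m - v l))⁻¹ * v m ^ k := by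
    intro m hm
    have hma : m ≠ a := fun h => ha (h ▸ hm)
    have herase : (insert a s).erase m = insert a (s.erase m) := by
      ext l
      simp only [Finset.mem_erase, Finset.mem_insert]
      constructor
      · rintro ⟨h1, h2 | h2⟩
        · exact Or.inl h2
        · exact Or.inr ⟨h1, h2⟩
      · rintro (h | ⟨h1, h2⟩)
        · exact ⟨h ▸ (fun hh => hma hh.symm), Or.inl h⟩
        · exact ⟨h1, Or.inr h2⟩
    have hanotin : a ∉ s.erase m := fun h => ha (Finset.mem_of_mem_erase h)
    have hprod : ∏ l ∈ (insert a s).erase m, (v m - v l)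
        = (v m - v a) * ∏ l ∈ s.erase m, (v m - v l) := by
      rw [herase, Finset.prod_insert hanotin]
    have hc : v m - v a ≠ 0 := sub_ne_zero.2 (fun h => hma (hv (by simp [hm]) (by simp) h))
    rw [hprod, mul_inv]
    set W := (∏ l ∈ s.erase m, (v m - v l))⁻¹
    field_simp
    ring
  rw [Finset.sum_congr rfl key, Finset.sum_add_distrib, ← Finset.mul_sum]
  simp only []
  have hA : (∏ l ∈ s, (v a - v l))⁻¹ * v a ^ (k + 1)
      = v a * ((∏ l ∈ s, (v a - v l))⁻¹ * v a ^ k) := by ring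
  rw [hA]; ring

lemma ddsum_singleton (v : Fin n → ℝ) (f : Fin n → ℝ) (a : Fin n) :
    ddsum v {a} f = f a := by
  simp [ddsum]

/-- B2: bound on divided differences of powers. -/
lemma ddsum_pow_bound (v : Fin n → ℝ) (ρ : ℝ) :
    ∀ k : ℕ, ∀ s : Finset (Fin n), s.Nonempty → Set.InjOn v ↑s → (∀ m ∈ s, |v m| ≤ ρ) →
      s.card - 1 ≤ k → |ddsum v s (fun m => v m ^ k)| ≤ 2 ^ k * ρ ^ (k - (s.card - 1)) := by
  intro k
  induction k with
  | zero =>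
    intro s hne hinj hρ hcard
    obtain ⟨a, rfl⟩ : ∃ a, s = {a} := by
      obtain ⟨a, rfl⟩ := Finset.card_eq_one.1 (le_antisymm (by omega) hne.card_pos)
      exact ⟨a, rfl⟩
    simp [ddsum_singleton]
  | succ k ih =>
    intro s hne hinj hρ hcard
    obtain ⟨a, has⟩ := hne
    have hρ0 : 0 ≤ ρ := le_trans (abs_nonneg _) (hρ a has)
    set s' := s.erase a with hs'def
    have ha' : a ∉ s' := Finset.notMem_erase a s
    have hins : insert a s' = s := Finset.insert_erase has
    by_cases hs'ne : s'.Nonempty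
    · have hcard' : s'.card = s.card - 1 := Finset.card_erase_of_mem has
      have h0 : 1 ≤ s.card := Finset.card_pos.2 ⟨a, has⟩
      have hc2 : 2 ≤ s.card := by
        have := hs'ne.card_pos
        omega
      have hrec := ddsum_pow_succ v a s' ha' (by rw [hins]; exact hinj) k
      rw [hins] at hrec
      have hmid : |v a * ddsum v s (fun m => v m ^ k)|
          ≤ 2 ^ k * ρ ^ (k + 1 - (s.card - 1)) := by
        rcases Nat.lt_or_ge k (s.card - 1) with hlt | hge
        · rw [ddsum_pow v s hinj k (by omega), if_neg (by omega)]
          simp only [mul_zero, abs_zero]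
          positivity
        · have h1 := ih s ⟨a, has⟩ hinj hρ hge
          calc |v a * ddsum v s (fun m => v m ^ k)|
              = |v a| * |ddsum v s (fun m => v m ^ k)| := abs_mul _ _
            _ ≤ ρ * (2 ^ k * ρ ^ (k - (s.card - 1))) := by
                apply mul_le_mul (hρ a has) h1 (abs_nonneg _) hρ0
            _ = 2 ^ k * ρ ^ (k + 1 - (s.card - 1)) := by
                rw [show k + 1 - (s.card - 1) = (k - (s.card - 1)) + 1 by omega, pow_succ]
                ring
      have htail : |ddsum v s' (fun m => v m ^ k)| ≤ 2 ^ k * ρ ^ (k + 1 - (s.card - 1)) := by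
        have h2 := ih s' hs'ne (hinj.mono (by rw [← hins]; exact fun z hz => by simp [hz]))
          (fun m hm => hρ m (Finset.mem_of_mem_erase hm)) (by omega)
        rw [hcard'] at h2
        rwa [show s.card - 1 - 1 = s.card - 2 by omega,
          show k - (s.card - 2) = k + 1 - (s.card - 1) by omega] at h2
      calc |ddsum v s (fun m => v m ^ (k + 1))|
          ≤ |v a * ddsum v s (fun m => v m ^ k)| + |ddsum v s' (fun m => v m ^ k)| := by
            rw [hrec]; exact abs_add_le _ _
        _ ≤ 2 ^ k * ρ ^ (k + 1 - (s.card - 1)) + 2 ^ k * ρ ^ (k + 1 - (s.card - 1)) :=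
            add_le_add hmid htail
        _ = 2 ^ (k + 1) * ρ ^ (k + 1 - (s.card - 1)) := by rw [pow_succ]; ring
    · have : s = {a} := by
        rw [← hins, Finset.not_nonempty_iff_eq_empty.1 hs'ne]
        rfl
      subst this
      rw [ddsum_singleton]
      simp only [Finset.card_singleton]
      calc |v a ^ (k + 1)| = |v a| ^ (k + 1) := abs_pow _ _
        _ ≤ ρ ^ (k + 1) := pow_le_pow_left₀ (abs_nonneg _) (hρ a has) _
        _ ≤ 2 ^ (k + 1) * ρ ^ (k + 1 - (1 - 1)) := by
            rw [Nat.sub_self, Nat.sub_zero]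
            exact le_mul_of_one_le_left (by positivity) (one_le_pow₀ (by norm_num))

/-- The Vandermonde-type product over pairs. -/
noncomputable def vprod (ξ : Fin n → ℝ) : ℝ := ∏ i : Fin n, ∏ l ∈ Finset.Iio i, (ξ i - ξ l)

lemma vprod_eq (ξ : Fin n → ℝ) :
    vprod ξ = ∏ i : Fin n, ∏ j ∈ Finset.Ioi i, (ξ j - ξ i) := by
  rw [vprod]
  rw [Finset.prod_comm' (s' := fun l => Finset.Ioi l) (t' := Finset.univ)
    (by intro i l; simp [Finset.mem_Iio, Finset.mem_Ioi])]

lemma vprod_ne_zero (ξ : Fin n → ℝ) (hξ : Function.Injective ξ) : vprod ξ ≠ 0 := by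
  rw [vprod]
  apply Finset.prod_ne_zero_iff.2
  intro i _
  apply Finset.prod_ne_zero_iff.2
  intro l hl
  exact sub_ne_zero.2 fun h => absurd (hξ h) (ne_of_gt (Finset.mem_Iio.1 hl)).symm.symm

/-- Step A: det A = vprod ξ * det (divided-difference matrix). -/
lemma det_eq_vprod_mul_det_ddsum (ξ : Fin n → ℝ) (hξ : Function.Injective ξ)
    (A : Matrix (Fin n) (Fin n) ℝ) :
    A.det = vprod ξ *
      Matrix.det (Matrix.of fun i j : Fin n => ddsum ξ (Finset.Iic i) (fun m => A m j)) := by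
  classical
  set L : Matrix (Fin n) (Fin n) ℝ := Matrix.of fun i m =>
    if m ∈ Finset.Iic i then (∏ l ∈ (Finset.Iic i).erase m, (ξ m - ξ l))⁻¹ else 0 with hL
  have hLA : (Matrix.of fun i j : Fin n => ddsum ξ (Finset.Iic i) (fun m => A m j)) = L * A := by
    ext i j
    rw [Matrix.mul_apply]
    simp only [Matrix.of_apply, hL, ddsum, ite_mul, zero_mul]
    rw [Finset.sum_ite_mem, Finset.univ_inter]
  have hLtri : L.BlockTriangular OrderDual.toDual := by
    intro i m him
    simp only [hL, Matrix.of_apply]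
    rw [if_neg]
    simp only [Finset.mem_Iic]
    exact not_le.2 him
  have hdetL : L.det = (vprod ξ)⁻¹ := by
    rw [Matrix.det_of_lowerTriangular L hLtri, vprod, ← Finset.prod_inv_distrib]
    refine Finset.prod_congr rfl fun i _ => ?_
    simp only [hL, Matrix.of_apply, if_pos (Finset.mem_Iic.2 le_rfl), Finset.Iic_erase]
  rw [hLA, Matrix.det_mul, hdetL]
  field_simp [vprod_ne_zero ξ hξ]

lemma entry_est (x r : ℝ) (hr : 0 < r) (ψ : ℕ → ℝ) (hsum : Summable fun k => r ^ k * |ψ k|)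
    (i : Fin n) (ξ : Fin n → ℝ) (hinj : Function.Injective ξ)
    (hlt : ∀ m : Fin n, |ξ m - x| < r) (ρ : ℝ) (hρ : ∀ m, |ξ m - x| ≤ ρ) (hρr : ρ ≤ r / 2) :
    |ddsum (fun m => ξ m - x) (Finset.Iic i) (fun m => ∑' k, (ξ m - x) ^ k * ψ k) - ψ i|
      ≤ ρ * ((2 / r) ^ ((i : ℕ) + 1) *
          ∑' k : ℕ, r ^ (k + ((i : ℕ) + 1)) * |ψ (k + ((i : ℕ) + 1))|) := by
  set v : Fin n → ℝ := fun m => ξ m - x with hv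
  have hvinj : Function.Injective v := fun a b h => hinj (by simpa [hv, sub_left_inj] using h)
  have hρ0 : 0 ≤ ρ := le_trans (abs_nonneg _) (hρ i)
  set s : Finset (Fin n) := Finset.Iic i with hs
  show |ddsum v s (fun m => ∑' (k : ℕ), v m ^ k * ψ k) - ψ (i : ℕ)|
      ≤ ρ * ((2 / r) ^ ((i : ℕ) + 1) *
          ∑' k : ℕ, r ^ (k + ((i : ℕ) + 1)) * |ψ (k + ((i : ℕ) + 1))|)
  have hcard : s.card = (i : ℕ) + 1 := Fin.card_Iic i
  have hSm : ∀ m : Fin n, Summable (fun k => v m ^ k * ψ k) := by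
    intro m
    refine Summable.of_norm_bounded hsum fun k => ?_
    rw [Real.norm_eq_abs, abs_mul, abs_pow]
    exact mul_le_mul_of_nonneg_right
      (pow_le_pow_left₀ (abs_nonneg _) (le_of_lt (hlt m)) k) (abs_nonneg _)
  have hinner : ∀ k : ℕ,
      (∑ m ∈ s, (∏ l ∈ s.erase m, (v m - v l))⁻¹ * (v m ^ k * ψ k))
        = ψ k * ddsum v s (fun m => v m ^ k) := by
    intro k
    rw [ddsum, Finset.mul_sum]
    exact Finset.sum_congr rfl fun m _ => by ring
  have hSum2 : Summable (fun k : ℕ => ∑ m ∈ s,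
      (∏ l ∈ s.erase m, (v m - v l))⁻¹ * (v m ^ k * ψ k)) :=
    summable_sum fun m _ => (hSm m).mul_left _
  have hS : Summable (fun k : ℕ => ψ k * ddsum v s (fun m => v m ^ k)) :=
    hSum2.congr hinner
  have hrepr : ddsum v s (fun m => ∑' k, v m ^ k * ψ k)
      = ∑' k : ℕ, ψ k * ddsum v s (fun m => v m ^ k) := by
    rw [ddsum]
    have h1 : ∀ m ∈ s, (∏ l ∈ s.erase m, (v m - v l))⁻¹ * (∑' k : ℕ, v m ^ k * ψ k)
        = ∑' k : ℕ, (∏ l ∈ s.erase m, (v m - v l))⁻¹ * (v m ^ k * ψ k) := fun m _ =>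
      (tsum_mul_left).symm
    rw [Finset.sum_congr rfl h1, ← Summable.tsum_finsetSum fun m _ => (hSm m).mul_left _]
    exact tsum_congr fun k => hinner k
  -- split the series
  have hfin : (∑ k ∈ Finset.range ((i : ℕ) + 1), ψ k * ddsum v s (fun m => v m ^ k)) = ψ i := by
    have hterm : ∀ k ∈ Finset.range ((i : ℕ) + 1),
        ψ k * ddsum v s (fun m => v m ^ k) = if k = (i : ℕ) then ψ k else 0 := by
      intro k hk
      rw [ddsum_pow v s (hvinj.injOn) k (by rw [hcard]; exact Finset.mem_range.1 hk), hcard]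
      simp only [Nat.add_sub_cancel, mul_ite, mul_one, mul_zero]
    rw [Finset.sum_congr rfl hterm, Finset.sum_ite_eq' (Finset.range ((i : ℕ) + 1)) (i : ℕ) ψ,
      if_pos (Finset.self_mem_range_succ _)]
  have hdd : ddsum v s (fun m => ∑' k, v m ^ k * ψ k) - ψ i
      = ∑' k : ℕ, ψ (k + ((i : ℕ) + 1)) * ddsum v s (fun m => v m ^ (k + ((i : ℕ) + 1))) := by
    rw [hrepr, ← Summable.sum_add_tsum_nat_add ((i : ℕ) + 1) hS, hfin]; ring
  rw [hdd]
  -- tail estimate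
  set g : ℕ → ℝ := fun k => (ρ * (2 / r) ^ ((i : ℕ) + 1)) *
    (r ^ (k + ((i : ℕ) + 1)) * |ψ (k + ((i : ℕ) + 1))|) with hg
  have hsne : s.Nonempty := ⟨i, Finset.mem_Iic.2 le_rfl⟩
  have htail_bd : ∀ k : ℕ,
      |ψ (k + ((i : ℕ) + 1)) * ddsum v s (fun m => v m ^ (k + ((i : ℕ) + 1)))| ≤ g k := by
    intro k
    set K := k + ((i : ℕ) + 1) with hK
    have hb := ddsum_pow_bound v ρ K s hsne hvinj.injOn (fun m _ => hρ m)
      (by rw [hcard]; omega)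
    rw [hcard, show K - ((i : ℕ) + 1 - 1) = k + 1 by omega] at hb
    have hkey : (2 : ℝ) ^ K * ρ ^ (k + 1) ≤ ρ * (2 / r) ^ ((i : ℕ) + 1) * r ^ K := by
      have e1 : ρ ^ k ≤ (r / 2) ^ k := pow_le_pow_left₀ hρ0 hρr k
      have e2 : (2 : ℝ) ^ K * ρ ^ (k + 1) = (2 ^ K * ρ) * ρ ^ k := by rw [pow_succ]; ring
      have e3 : (2 : ℝ) ^ K * ρ * (r / 2) ^ k = ρ * (2 / r) ^ ((i : ℕ) + 1) * r ^ K := by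
        rw [hK, div_pow, div_pow, pow_add]
        field_simp
        ring
      rw [e2, ← e3]
      exact mul_le_mul_of_nonneg_left e1 (by positivity)
    calc |ψ K * ddsum v s (fun m => v m ^ K)|
        = |ψ K| * |ddsum v s (fun m => v m ^ K)| := abs_mul _ _
      _ ≤ |ψ K| * (2 ^ K * ρ ^ (k + 1)) := mul_le_mul_of_nonneg_left hb (abs_nonneg _)
      _ ≤ |ψ K| * (ρ * (2 / r) ^ ((i : ℕ) + 1) * r ^ K) :=
          mul_le_mul_of_nonneg_left hkey (abs_nonneg _)
      _ = g k := by rw [hg]; ring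
  have hshift : Summable (fun k : ℕ => r ^ (k + ((i : ℕ) + 1)) * |ψ (k + ((i : ℕ) + 1))|) :=
    (summable_nat_add_iff (f := fun k => r ^ k * |ψ k|) ((i : ℕ) + 1)).2 hsum
  have hgsum : Summable g := by
    rw [hg]
    exact hshift.mul_left _
  have habs_sum : Summable (fun k : ℕ =>
      |ψ (k + ((i : ℕ) + 1)) * ddsum v s (fun m => v m ^ (k + ((i : ℕ) + 1)))|) :=
    Summable.of_nonneg_of_le (fun k => abs_nonneg _) htail_bd hgsum
  calc |∑' k : ℕ, ψ (k + ((i : ℕ) + 1)) * ddsum v s (fun m => v m ^ (k + ((i : ℕ) + 1)))|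
      ≤ ∑' k : ℕ, |ψ (k + ((i : ℕ) + 1)) * ddsum v s (fun m => v m ^ (k + ((i : ℕ) + 1)))| := by
        have hn := norm_tsum_le_tsum_norm (f := fun k : ℕ =>
          ψ (k + ((i : ℕ) + 1)) * ddsum v s (fun m => v m ^ (k + ((i : ℕ) + 1))))
          (by simpa only [Real.norm_eq_abs] using habs_sum)
        simpa only [Real.norm_eq_abs] using hn
    _ ≤ ∑' k : ℕ, g k := Summable.tsum_le_tsum htail_bd habs_sum hgsum
    _ = ρ * ((2 / r) ^ ((i : ℕ) + 1) *
          ∑' k : ℕ, r ^ (k + ((i : ℕ) + 1)) * |ψ (k + ((i : ℕ) + 1))|) := by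
        rw [hg, tsum_mul_left, mul_assoc]

lemma ddsum_shift (ξ : Fin n → ℝ) (x : ℝ) (s : Finset (Fin n)) (f : Fin n → ℝ) :
    ddsum (fun m => ξ m - x) s f = ddsum ξ s f := by
  simp [ddsum, sub_sub_sub_cancel_right]

lemma det_vdm (x : ℝ) (ξ : Fin n → ℝ) :
    (Matrix.of fun i j : Fin n => (ξ j - x) ^ (i : ℕ)).det = vprod ξ := by
  have h1 : (Matrix.of fun i j : Fin n => (ξ j - x) ^ (i : ℕ))
      = Matrix.transpose (Matrix.vandermonde (fun j => ξ j - x)) := by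
    ext i j
    simp [Matrix.vandermonde, Matrix.transpose_apply]
  rw [h1, Matrix.det_transpose, Matrix.det_vandermonde, vprod_eq]
  exact Finset.prod_congr rfl fun i _ => Finset.prod_congr rfl fun j _ => by ring


variable {n : ℕ} in
/-- Entrance laws as biorthogonal ensembles: if `P(x',y_j) = P(x,y_j) F(x') Σ_i (x'-x)^i φ_i(y_j)`
with the stated normalization and summability, then as `(x_1,…,x_n) → (x,…,x)` through tuples
of pairwise distinct points of `(x-r,x+r)`,
`det(P(x_i,y_j))/det((x_j-x)^{i-1}) → F(x)^n · ∏_j P(x,y_j) · det(φ_{i-1}(y_j))`. -/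
theorem entrance_law_biorthogonal_limit (n : ℕ) (hn : 1 ≤ n)
    (x r : ℝ) (hr : 0 < r) (y : Fin n → ℝ)
    (P : ℝ → ℝ → ℝ) (F : ℝ → ℝ) (φ : ℕ → ℝ → ℝ)
    (hF : ContinuousAt F x)
    (hP0 : ∀ j : Fin n, P x (y j) ≠ 0)
    (hnorm : ∀ j : Fin n, F x * φ 0 (y j) = 1)
    (hsum : ∀ j : Fin n, Summable fun i : ℕ => r ^ i * |φ i (y j)|)
    (hexp : ∀ x' : ℝ, |x' - x| < r → ∀ j : Fin n,
      P x' (y j) = P x (y j) * F x' * ∑' i : ℕ, (x' - x) ^ i * φ i (y j)) :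
    Filter.Tendsto
      (fun ξ : Fin n → ℝ =>
        Matrix.det (Matrix.of fun i j : Fin n => P (ξ i) (y j)) /
          Matrix.det (Matrix.of fun i j : Fin n => (ξ j - x) ^ (i : ℕ)))
      (nhdsWithin (fun _ => x)
        {ξ : Fin n → ℝ | Function.Injective ξ ∧ ∀ i : Fin n, ξ i ∈ Set.Ioo (x - r) (x + r)})
      (nhds ((F x) ^ n * (∏ j : Fin n, P x (y j)) *
        Matrix.det (Matrix.of fun i j : Fin n => φ (i : ℕ) (y j)))) := by
  classical
  set S : Set (Fin n → ℝ) :=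
    {ξ : Fin n → ℝ | Function.Injective ξ ∧ ∀ i : Fin n, ξ i ∈ Set.Ioo (x - r) (x + r)} with hS
  set l := nhdsWithin (fun _ : Fin n => x) S with hl
  set Dmat : (Fin n → ℝ) → Matrix (Fin n) (Fin n) ℝ := fun ξ =>
    Matrix.of fun i j : Fin n =>
      ddsum ξ (Finset.Iic i) (fun m => ∑' k : ℕ, (ξ m - x) ^ k * φ k (y j)) with hD
  set Φmat : Matrix (Fin n) (Fin n) ℝ := Matrix.of fun i j : Fin n => φ (i : ℕ) (y j) with hΦ
  set C₀ : ℝ := ∏ j : Fin n, P x (y j) with hC₀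
  have hmemS : ∀ᶠ ξ in l, ξ ∈ S := eventually_mem_nhdsWithin
  -- eventual equality of the ratio with the factored expression
  have heq : ∀ ξ ∈ S, (Matrix.det (Matrix.of fun i j : Fin n => P (ξ i) (y j)) /
        Matrix.det (Matrix.of fun i j : Fin n => (ξ j - x) ^ (i : ℕ)))
      = C₀ * ((∏ i : Fin n, F (ξ i)) * (Dmat ξ).det) := by
    intro ξ hξ
    obtain ⟨hinj, hIoo⟩ := hξ
    have hlt : ∀ m : Fin n, |ξ m - x| < r := by
      intro m
      rw [abs_sub_lt_iff]
      constructor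
      · linarith [(hIoo m).2]
      · linarith [(hIoo m).1]
    have hnum : (Matrix.of fun i j : Fin n => P (ξ i) (y j))
        = Matrix.of fun i j : Fin n =>
            P x (y j) * (F (ξ i) * ∑' k : ℕ, (ξ i - x) ^ k * φ k (y j)) := by
      ext i j
      simp only [Matrix.of_apply]
      rw [hexp (ξ i) (hlt i) j]
      ring
    have hrow : (Matrix.of fun i j : Fin n =>
          P x (y j) * (F (ξ i) * ∑' k : ℕ, (ξ i - x) ^ k * φ k (y j))).det
        = C₀ * (Matrix.of fun i j : Fin n =>
            F (ξ i) * ∑' k : ℕ, (ξ i - x) ^ k * φ k (y j)).det := by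
      rw [hC₀]
      exact Matrix.det_mul_row (fun j => P x (y j)) _
    have hcol : (Matrix.of fun i j : Fin n =>
          F (ξ i) * ∑' k : ℕ, (ξ i - x) ^ k * φ k (y j)).det
        = (∏ i : Fin n, F (ξ i)) * (Matrix.of fun i j : Fin n =>
            ∑' k : ℕ, (ξ i - x) ^ k * φ k (y j)).det := by
      exact Matrix.det_mul_column (fun i => F (ξ i)) _
    have hG : (Matrix.of fun i j : Fin n => ∑' k : ℕ, (ξ i - x) ^ k * φ k (y j)).det
        = vprod ξ * (Dmat ξ).det := by
      rw [det_eq_vprod_mul_det_ddsum ξ hinj]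
      rfl
    rw [hnum, hrow, hcol, hG, det_vdm x ξ]
    field_simp [vprod_ne_zero ξ hinj]
  have hEq : (fun ξ : Fin n → ℝ =>
        Matrix.det (Matrix.of fun i j : Fin n => P (ξ i) (y j)) /
          Matrix.det (Matrix.of fun i j : Fin n => (ξ j - x) ^ (i : ℕ)))
      =ᶠ[l] fun ξ => C₀ * ((∏ i : Fin n, F (ξ i)) * (Dmat ξ).det) :=
    hmemS.mono fun ξ h => heq ξ h
  -- convergence of each ingredient
  have hξm : ∀ m : Fin n, Filter.Tendsto (fun ξ : Fin n → ℝ => ξ m) l (nhds x) :=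
    fun m => ((continuous_apply m).tendsto _).mono_left nhdsWithin_le_nhds
  have hFprod : Filter.Tendsto (fun ξ : Fin n → ℝ => ∏ i : Fin n, F (ξ i)) l
      (nhds (F x ^ n)) := by
    have h1 : Filter.Tendsto (fun ξ : Fin n → ℝ => ∏ i : Fin n, F (ξ i)) l
        (nhds (∏ _i : Fin n, F x)) :=
      tendsto_finset_prod _ fun i _ => hF.tendsto.comp (hξm i)
    simpa using h1
  have hdist0 : Filter.Tendsto (fun ξ : Fin n → ℝ => dist ξ (fun _ => x)) l (nhds 0) := by
    have hid : Filter.Tendsto (fun ξ : Fin n → ℝ => ξ) l (nhds (fun _ => x)) :=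
      Filter.tendsto_id'.2 nhdsWithin_le_nhds
    exact tendsto_iff_dist_tendsto_zero.1 hid
  have hDtend : Filter.Tendsto Dmat l (nhds Φmat) := by
    apply tendsto_pi_nhds.2
    intro i
    rw [tendsto_pi_nhds]
    intro j
    set C : ℝ := (2 / r) ^ ((i : ℕ) + 1) *
      ∑' k : ℕ, r ^ (k + ((i : ℕ) + 1)) * |φ (k + ((i : ℕ) + 1)) (y j)| with hC
    have hsmall : ∀ᶠ ξ in l, dist ξ (fun _ => x) ≤ r / 2 :=
      hdist0.eventually (eventually_le_nhds (by positivity))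
    apply tendsto_iff_dist_tendsto_zero.2
    apply squeeze_zero' (Filter.Eventually.of_forall fun ξ => dist_nonneg)
      (g := fun ξ => dist ξ (fun _ => x) * C)
    · filter_upwards [hmemS, hsmall] with ξ hξS hξd
      obtain ⟨hinj, hIoo⟩ := hξS
      have hlt : ∀ m : Fin n, |ξ m - x| < r := by
        intro m
        rw [abs_sub_lt_iff]
        exact ⟨by linarith [(hIoo m).2], by linarith [(hIoo m).1]⟩
      have hρ : ∀ m : Fin n, |ξ m - x| ≤ dist ξ (fun _ => x) := by
        intro m
        have := dist_le_pi_dist ξ (fun _ => x) m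
        rwa [Real.dist_eq] at this
      have hest := entry_est x r hr (fun k => φ k (y j)) (hsum j) i ξ hinj hlt
        (dist ξ (fun _ => x)) hρ hξd
      rw [ddsum_shift] at hest
      calc dist (Dmat ξ i j) (Φmat i j)
          = |ddsum ξ (Finset.Iic i) (fun m => ∑' k : ℕ, (ξ m - x) ^ k * φ k (y j))
              - φ (i : ℕ) (y j)| := by rw [Real.dist_eq]; rfl
        _ ≤ dist ξ (fun _ => x) * C := by rw [hC]; exact hest
    · have := hdist0.mul_const C
      simpa using this
  have hDdet : Filter.Tendsto (fun ξ => (Dmat ξ).det) l (nhds Φmat.det) :=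
    ((Continuous.matrix_det continuous_id).tendsto Φmat).comp hDtend
  have hfinal : Filter.Tendsto (fun ξ => C₀ * ((∏ i : Fin n, F (ξ i)) * (Dmat ξ).det)) l
      (nhds (C₀ * (F x ^ n * Φmat.det))) :=
    (hFprod.mul hDdet).const_mul C₀
  have htarget : (F x) ^ n * (∏ j : Fin n, P x (y j)) *
      Matrix.det (Matrix.of fun i j : Fin n => φ (i : ℕ) (y j))
      = C₀ * (F x ^ n * Φmat.det) := by
    rw [hC₀, hΦ]; ring
  rw [htarget]
  exact Filter.Tendsto.congr' hEq.symm hfinal
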